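/- There is an absolute constant C such that for every n ≥ 1 and every multi-index ρ = (ρ₁,…,ρ_n) ∈ ℕ^n one has ∑ ρ!/(ρ¹!ρ²!⋯ρ⁹!) · (2|ρ¹|)!(2|ρ²|)!⋯(2|ρ⁹|)! ≤ C·(2|ρ|)!, where the sum ranges over all ordered 9-tuples (ρ¹,…,ρ⁹) of multi-indices in ℕ^n with ρ¹+⋯+ρ⁹ = ρ componentwise. -/

import Mathlib

namespace WKE

open Finset Nat Polynomial


lemma le_choose {m k : ℕ} (h1 : 1 ≤ k) (h2 : k < m) : m ≤ m.choose k := by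
  obtain ⟨t, rfl⟩ : ∃ t, k = t + 1 := ⟨k - 1, by omega⟩
  have hle : t + 1 ≤ (m - 1).choose t := by
    calc t + 1 = (t+1).choose t := (Nat.choose_succ_self_right t).symm
    _ ≤ (m-1).choose t := Nat.choose_le_choose t (by omega)
  have key := Nat.add_one_mul_choose_eq (m-1) t
  have hm : (m-1) + 1 = m := by omega
  rw [hm] at key
  have h2' : m * (t+1) ≤ m.choose (t+1) * (t+1) := by
    calc m * (t+1) ≤ m * (m-1).choose t := Nat.mul_le_mul_left m hle
    _ = m.choose (t+1) * (t+1) := key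
  exact Nat.le_of_mul_le_mul_right h2' (by omega)

lemma sq_choose (m k : ℕ) : m.choose k * m.choose k ≤ (2*m).choose (2*k) := by
  rw [two_mul, two_mul, Nat.add_choose_eq]
  exact Finset.single_le_sum (f := fun p : ℕ × ℕ => m.choose p.1 * m.choose p.2)
    (fun i _ => Nat.zero_le _) (Finset.HasAntidiagonal.mem_antidiagonal.mpr rfl : (k, k) ∈ Finset.HasAntidiagonal.antidiagonal (k + k))


lemma vandermonde (n : ℕ) (ρ : Fin n → ℕ) (k : ℕ) :
    ∑ σ ∈ (Fintype.piFinset fun j => range (ρ j + 1)) with ∑ j, σ j = k,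
      ∏ j, (ρ j).choose (σ j) = (∑ j, ρ j).choose k := by
  classical
  have hprod : (∏ j, ((X + 1 : Polynomial ℕ)) ^ (ρ j)) = (X + 1 : Polynomial ℕ) ^ (∑ j, ρ j) :=
    Finset.prod_pow_eq_pow_sum _ _ _
  have hC : ∀ c : ℕ, ((c : Polynomial ℕ)) = C c := fun c => (C_eq_natCast c).symm
  have hexp : (∏ j, ((X + 1 : Polynomial ℕ)) ^ (ρ j))
      = ∑ σ ∈ Fintype.piFinset (fun j => range (ρ j + 1)),
          (((∏ j, (ρ j).choose (σ j) : ℕ) : Polynomial ℕ) * X ^ (∑ j, σ j)) := by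
    calc (∏ j, ((X + 1 : Polynomial ℕ)) ^ (ρ j))
        = ∏ j, ∑ s ∈ range (ρ j + 1), (((ρ j).choose s : ℕ) : Polynomial ℕ) * X ^ s := by
          refine Finset.prod_congr rfl fun j _ => ?_
          rw [add_pow]
          refine Finset.sum_congr rfl fun s _ => ?_
          rw [one_pow, mul_one, mul_comm]
      _ = ∑ σ ∈ Fintype.piFinset (fun j => range (ρ j + 1)),
            ∏ j, (((ρ j).choose (σ j) : ℕ) : Polynomial ℕ) * X ^ (σ j) := Finset.prod_univ_sum _ _
      _ = ∑ σ ∈ Fintype.piFinset (fun j => range (ρ j + 1)),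
          (((∏ j, (ρ j).choose (σ j) : ℕ) : Polynomial ℕ) * X ^ (∑ j, σ j)) := by
          refine Finset.sum_congr rfl fun σ _ => ?_
          rw [Finset.prod_mul_distrib, Finset.prod_pow_eq_pow_sum, Nat.cast_prod]
  have hco := congrArg (fun p => Polynomial.coeff p k) (hexp.symm.trans hprod)
  simp only [hC, Polynomial.finset_sum_coeff, Polynomial.coeff_C_mul, Polynomial.coeff_X_pow,
    Polynomial.coeff_X_add_one_pow, mul_ite, mul_one, mul_zero] at hco
  rw [Finset.sum_filter]
  rw [← Nat.cast_id ((∑ j, ρ j).choose k), ← hco]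
  refine Finset.sum_congr rfl fun σ _ => ?_
  by_cases h : (∑ j, σ j) = k
  · rw [if_pos h, if_pos h.symm]
  · rw [if_neg h, if_neg (fun hc => h hc.symm)]



lemma sumD (m : ℕ) :
    ∑ k ∈ range (m+1), m.choose k * ((2*k)! * (2*(m-k))!) ≤ 3 * (2*m)! := by
  rcases Nat.eq_zero_or_pos m with rfl | hm
  · simp [Nat.factorial]
  have key : ∀ k, k ≤ m → m.choose k * (m.choose k * ((2*k)! * (2*(m-k))!)) ≤ (2*m)! := by
    intro k hk
    have h1 : (2*m).choose (2*k) * (2*k)! * (2*m - 2*k)! = (2*m)! :=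
      Nat.choose_mul_factorial_mul_factorial (by omega)
    have h2 := sq_choose m k
    have h3 : 2*(m-k) = 2*m - 2*k := by omega
    calc m.choose k * (m.choose k * ((2*k)! * (2*(m-k))!))
        = (m.choose k * m.choose k) * ((2*k)! * (2*(m-k))!) := by ring
      _ ≤ (2*m).choose (2*k) * ((2*k)! * (2*(m-k))!) := Nat.mul_le_mul_right _ h2
      _ = (2*m)! := by rw [h3, ← h1]; ring
  have mid : ∀ k, 1 ≤ k → k < m → m * (m.choose k * ((2*k)! * (2*(m-k))!)) ≤ (2*m)! := by
    intro k h1 h2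
    calc m * (m.choose k * ((2*k)! * (2*(m-k))!))
        ≤ m.choose k * (m.choose k * ((2*k)! * (2*(m-k))!)) :=
          Nat.mul_le_mul_right _ (le_choose h1 h2)
      _ ≤ (2*m)! := key k (le_of_lt h2)
  have main : m * ∑ k ∈ range (m+1), m.choose k * ((2*k)! * (2*(m-k))!) ≤ m * (3 * (2*m)!) := by
    rw [Finset.mul_sum, Finset.sum_range_succ]
    obtain ⟨p, hp⟩ : ∃ p, m = p + 1 := ⟨m-1, by omega⟩
    have hrange : range m = range (p+1) := by rw [hp]
    rw [hrange, Finset.sum_range_succ']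
    have hb : ∑ i ∈ range p, m * (m.choose (i+1) * ((2*(i+1))! * (2*(m-(i+1)))!)) ≤ p * (2*m)! := by
      calc ∑ i ∈ range p, m * (m.choose (i+1) * ((2*(i+1))! * (2*(m-(i+1)))!))
          ≤ ∑ _i ∈ range p, (2*m)! :=
            Finset.sum_le_sum (fun i hi => mid (i+1) (by omega)
              (by have := Finset.mem_range.mp hi; omega))
        _ = p * (2*m)! := by rw [Finset.sum_const, smul_eq_mul, Finset.card_range]
    have h0 : m * (m.choose 0 * ((2*0)! * (2*(m-0))!)) = m * (2*m)! := by
      simp [Nat.factorial]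
    have hmm : m * (m.choose m * ((2*m)! * (2*(m-m))!)) = m * (2*m)! := by
      simp [Nat.factorial]
    calc ∑ i ∈ range p, m * (m.choose (i+1) * ((2*(i+1))! * (2*(m-(i+1)))!))
          + m * (m.choose 0 * ((2*0)! * (2*(m-0))!))
          + m * (m.choose m * ((2*m)! * (2*(m-m))!))
        ≤ p * (2*m)! + m * (2*m)! + m * (2*m)! := by
          rw [h0, hmm]; exact Nat.add_le_add_right (Nat.add_le_add_right hb _) _
      _ ≤ m * (3 * (2*m)!) := by nlinarith [hp.ge]
  exact Nat.le_of_mul_le_mul_left main hm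



lemma twoPart (n : ℕ) (ρ : Fin n → ℕ) :
    ∑ σ ∈ Fintype.piFinset (fun j => range (ρ j + 1)),
      (∏ j, (ρ j).choose (σ j)) * ((2 * ∑ j, σ j)! * (2 * (∑ j, ρ j - ∑ j, σ j))!)
      ≤ 3 * (2 * ∑ j, ρ j)! := by
  classical
  set m := ∑ j, ρ j with hm
  have hmap : ∀ σ ∈ Fintype.piFinset (fun j => range (ρ j + 1)),
      (∑ j, σ j) ∈ range (m + 1) := by
    intro σ hσ
    rw [Finset.mem_range]
    have : ∑ j, σ j ≤ m := Finset.sum_le_sum (fun j _ => by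
      have := (Fintype.mem_piFinset.mp hσ) j
      rw [Finset.mem_range] at this; omega)
    omega
  rw [← Finset.sum_fiberwise_of_maps_to hmap]
  calc ∑ k ∈ range (m+1), ∑ σ ∈ (Fintype.piFinset fun j => range (ρ j + 1)) with ∑ j, σ j = k,
        (∏ j, (ρ j).choose (σ j)) * ((2 * ∑ j, σ j)! * (2 * (m - ∑ j, σ j))!)
      = ∑ k ∈ range (m+1), m.choose k * ((2*k)! * (2*(m-k))!) := by
        refine Finset.sum_congr rfl fun k _ => ?_
        rw [← vandermonde n ρ k, Finset.sum_mul]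
        refine Finset.sum_congr rfl fun σ hσ => ?_
        rw [(Finset.mem_filter.mp hσ).2]
    _ ≤ 3 * (2*m)! := sumD m



lemma mainS (r : ℕ) : ∀ (n : ℕ) (ρ : Fin n → ℕ),
    ∑ τ ∈ Fintype.piFinset (fun j => Finset.Nat.antidiagonalTuple r (ρ j)),
      (∏ j, (((ρ j)! : ℝ) / ∏ i, ((τ j i)! : ℝ))) * ∏ i, (((2 * ∑ j, τ j i)! : ℝ))
      ≤ 3^r * (((2 * ∑ j, ρ j)! : ℕ) : ℝ) := by
  induction r with
  | zero =>
    intro n ρ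
    by_cases h : ∀ j, ρ j = 0
    · have hρ : ∑ j, ρ j = 0 := Finset.sum_eq_zero fun j _ => h j
      rw [Finset.sum_eq_single_of_mem (fun _ : Fin n => (![] : Fin 0 → ℕ))]
      · simp [hρ, h]
      · rw [Fintype.mem_piFinset]; intro j
        rw [Finset.Nat.mem_antidiagonalTuple]
        simp [h j]
      · intro b _ hb
        exact absurd (_root_.funext fun j => _root_.funext fun i => i.elim0) hb
    · push_neg at h; obtain ⟨j0, hj0⟩ := h
      rw [Finset.sum_eq_zero]
      · positivity
      · intro τ hτ
        have h2 := (Fintype.mem_piFinset.mp hτ) j0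
        rw [Finset.Nat.mem_antidiagonalTuple] at h2
        simp only [Finset.univ_eq_empty, Finset.sum_empty] at h2
        exact absurd h2.symm hj0
  | succ r ih =>
    intro n ρ
    classical
    set m := ∑ j, ρ j with hm
    set B := Fintype.piFinset (fun j => range (ρ j + 1)) with hB
    set Cf := fun σ : Fin n → ℕ =>
      Fintype.piFinset (fun j => Finset.Nat.antidiagonalTuple r (ρ j - σ j)) with hCf
    set F := fun τ : Fin n → Fin (r+1) → ℕ =>
      (∏ j, (((ρ j)! : ℝ) / ∏ i, ((τ j i)! : ℝ))) * ∏ i, (((2 * ∑ j, τ j i)! : ℝ)) with hF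
    have hsub : ∀ σ ∈ B, ∀ j, σ j ≤ ρ j := by
      intro σ hσ j
      have := (Fintype.mem_piFinset.mp hσ) j
      rw [Finset.mem_range] at this; omega
    have hsumsub : ∀ σ ∈ B, ∑ j, (ρ j - σ j) = m - ∑ j, σ j := by
      intro σ hσ
      have h1 : ∑ j, (ρ j - σ j) + ∑ j, σ j = m := by
        rw [← Finset.sum_add_distrib]
        exact Finset.sum_congr rfl fun j _ => by have := hsub σ hσ j; omega
      omega
    have step1 : ∑ τ ∈ Fintype.piFinset (fun j => Finset.Nat.antidiagonalTuple (r+1) (ρ j)), F τ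
        = ∑ σ ∈ B, ∑ υ ∈ Cf σ, F (fun j => Fin.cons (σ j) (υ j)) := by
      rw [Finset.sum_sigma']
      refine Finset.sum_nbij'
        (i := fun τ => (⟨fun j => τ j 0, fun j => Fin.tail (τ j)⟩ :
          Σ _ : Fin n → ℕ, Fin n → Fin r → ℕ))
        (j := fun p => fun j => Fin.cons (p.1 j) (p.2 j)) ?_ ?_ ?_ ?_ ?_
      · intro τ hτ
        rw [Finset.mem_sigma]
        have hτ' := Fintype.mem_piFinset.mp hτ
        constructor
        · rw [Fintype.mem_piFinset]
          intro j
          have := Finset.Nat.mem_antidiagonalTuple.mp (hτ' j)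
          rw [Finset.mem_range]
          show τ j 0 < ρ j + 1
          have h0 : τ j 0 ≤ ∑ i, τ j i :=
            Finset.single_le_sum (fun i _ => Nat.zero_le _) (Finset.mem_univ 0)
          omega
        · rw [Fintype.mem_piFinset]
          intro j
          have := Finset.Nat.mem_antidiagonalTuple.mp (hτ' j)
          rw [Finset.Nat.mem_antidiagonalTuple]
          show ∑ i, Fin.tail (τ j) i = ρ j - τ j 0
          rw [Fin.sum_univ_succ] at this
          simp only [Fin.tail]
          omega
      · intro p hp
        rw [Finset.mem_sigma] at hp
        rw [Fintype.mem_piFinset]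
        intro j
        rw [Finset.Nat.mem_antidiagonalTuple, Fin.sum_univ_succ]
        have h1 := (Fintype.mem_piFinset.mp hp.1) j
        rw [Finset.mem_range] at h1
        have h2 := Finset.Nat.mem_antidiagonalTuple.mp ((Fintype.mem_piFinset.mp hp.2) j)
        simp only [Fin.cons_zero, Fin.cons_succ]
        omega
      · intro τ _
        funext j
        exact Fin.cons_self_tail (τ j)
      · intro p _
        obtain ⟨σ, υ⟩ := p
        simp [Fin.tail_cons]
      · intro τ _
        exact congrArg F (_root_.funext fun j => (Fin.cons_self_tail (τ j)).symm)
    rw [step1]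
    have hval : ∀ σ ∈ B, ∀ υ ∈ Cf σ, F (fun j => Fin.cons (σ j) (υ j))
        = ((∏ j, ((ρ j).choose (σ j) : ℝ)) * ((2 * ∑ j, σ j)! : ℝ)) *
          ((∏ j, ((((ρ j - σ j))! : ℝ) / ∏ i, ((υ j i)! : ℝ))) *
            ∏ i, (((2 * ∑ j, υ j i)! : ℝ))) := by
      intro σ hσ υ hυ
      rw [hF]
      simp only []
      have e1 : ∀ j, (∏ i, (((Fin.cons (σ j) (υ j) : Fin (r+1) → ℕ) i)! : ℝ))
          = ((σ j)! : ℝ) * ∏ i, ((υ j i)! : ℝ) := by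
        intro j
        rw [Fin.prod_univ_succ]
        simp [Fin.cons_succ]
      have e2 : (∏ i, (((2 * ∑ j, (Fin.cons (σ j) (υ j) : Fin (r+1) → ℕ) i)! : ℝ)))
          = ((2 * ∑ j, σ j)! : ℝ) * ∏ i, (((2 * ∑ j, υ j i)! : ℝ)) := by
        rw [Fin.prod_univ_succ]
        simp [Fin.cons_succ]
      have e3 : ∀ j, ((ρ j)! : ℝ) / (((σ j)! : ℝ) * ∏ i, ((υ j i)! : ℝ))
          = ((ρ j).choose (σ j) : ℝ) * ((((ρ j - σ j))! : ℝ) / ∏ i, ((υ j i)! : ℝ)) := by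
        intro j
        have hfac : ((ρ j)! : ℝ) =
            ((ρ j).choose (σ j) : ℝ) * ((σ j)! : ℝ) * (((ρ j - σ j))! : ℝ) := by
          rw [← Nat.cast_mul, ← Nat.cast_mul,
            Nat.choose_mul_factorial_mul_factorial (hsub σ hσ j)]
        have h1 : ((σ j)! : ℝ) ≠ 0 := Nat.cast_ne_zero.mpr (Nat.factorial_ne_zero _)
        have h2 : (∏ i, ((υ j i)! : ℝ)) ≠ 0 := by
          refine Finset.prod_ne_zero_iff.mpr fun i _ => ?_
          exact Nat.cast_ne_zero.mpr (Nat.factorial_ne_zero _)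
        field_simp [hfac]
        rw [hfac]; ring
      calc (∏ j, (((ρ j)! : ℝ) / ∏ i, (((Fin.cons (σ j) (υ j) : Fin (r+1) → ℕ) i)! : ℝ))) *
            ∏ i, (((2 * ∑ j, (Fin.cons (σ j) (υ j) : Fin (r+1) → ℕ) i)! : ℝ))
          = (∏ j, (((ρ j).choose (σ j) : ℝ) * ((((ρ j - σ j))! : ℝ) / ∏ i, ((υ j i)! : ℝ)))) *
            (((2 * ∑ j, σ j)! : ℝ) * ∏ i, (((2 * ∑ j, υ j i)! : ℝ))) := by
            rw [e2]
            congr 1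
            refine Finset.prod_congr rfl fun j _ => ?_
            rw [e1 j, e3 j]
        _ = _ := by
            rw [Finset.prod_mul_distrib]
            ring
    calc ∑ σ ∈ B, ∑ υ ∈ Cf σ, F (fun j => Fin.cons (σ j) (υ j))
        = ∑ σ ∈ B.attach, ((∏ j, ((ρ j).choose (σ.1 j) : ℝ)) * ((2 * ∑ j, σ.1 j)! : ℝ)) *
            ∑ υ ∈ Cf σ.1, ((∏ j, ((((ρ j - σ.1 j))! : ℝ) / ∏ i, ((υ j i)! : ℝ))) *
              ∏ i, (((2 * ∑ j, υ j i)! : ℝ))) := by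
          rw [← Finset.sum_attach B (fun σ => ∑ υ ∈ Cf σ, F (fun j => Fin.cons (σ j) (υ j)))]
          refine Finset.sum_congr rfl fun σ _ => ?_
          rw [Finset.mul_sum]
          exact Finset.sum_congr rfl fun υ hυ => hval σ.1 σ.2 υ hυ
      _ ≤ ∑ σ ∈ B.attach, ((∏ j, ((ρ j).choose (σ.1 j) : ℝ)) * ((2 * ∑ j, σ.1 j)! : ℝ)) *
            (3^r * (((2 * (m - ∑ j, σ.1 j))! : ℕ) : ℝ)) := by
          refine Finset.sum_le_sum fun σ _ => ?_
          refine mul_le_mul_of_nonneg_left ?_ (by positivity)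
          have := ih n (fun j => ρ j - σ.1 j)
          rw [hsumsub σ.1 σ.2] at this
          exact this
      _ = 3^r * ∑ σ ∈ B, ((∏ j, ((ρ j).choose (σ j) : ℝ)) *
            (((2 * ∑ j, σ j)! : ℝ) * (((2 * (m - ∑ j, σ j))! : ℝ)))) := by
          rw [Finset.mul_sum, ← Finset.sum_attach B
            (fun σ => 3^r * ((∏ j, ((ρ j).choose (σ j) : ℝ)) *
              (((2 * ∑ j, σ j)! : ℝ) * (((2 * (m - ∑ j, σ j))! : ℝ)))))]
          refine Finset.sum_congr rfl fun σ _ => by ring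
      _ ≤ 3^r * (3 * (((2 * m)! : ℕ) : ℝ)) := by
          refine mul_le_mul_of_nonneg_left ?_ (by positivity)
          have hcast : ∑ σ ∈ B, ((∏ j, ((ρ j).choose (σ j) : ℝ)) *
              (((2 * ∑ j, σ j)! : ℝ) * (((2 * (m - ∑ j, σ j))! : ℝ))))
              = ((∑ σ ∈ B, (∏ j, (ρ j).choose (σ j)) *
                  ((2 * ∑ j, σ j)! * (2 * (m - ∑ j, σ j))!) : ℕ) : ℝ) := by
            push_cast
            rfl
          rw [hcast, show (3 : ℝ) * (((2 * m)! : ℕ) : ℝ) = ((3 * (2*m)! : ℕ) : ℝ) by push_cast; ring]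
          exact_mod_cast Nat.cast_le.mpr (twoPart n ρ)
      _ = 3^(r+1) * (((2 * m)! : ℕ) : ℝ) := by ring


theorem multiindex_factorial_sum_bound :
    ∃ C : ℝ, ∀ n : ℕ, 1 ≤ n → ∀ ρ : Fin n → ℕ,
      ∑ τ ∈ Fintype.piFinset (fun j => Finset.Nat.antidiagonalTuple 9 (ρ j)),
        ((∏ j, (Nat.factorial (ρ j) : ℝ)) /
            ∏ i : Fin 9, ∏ j, (Nat.factorial (τ j i) : ℝ)) *
          ∏ i : Fin 9, (Nat.factorial (2 * ∑ j, τ j i) : ℝ) ≤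
        C * Nat.factorial (2 * ∑ j, ρ j) := by
  refine ⟨3^9, fun n _ ρ => ?_⟩
  have h := mainS 9 n ρ
  calc ∑ τ ∈ Fintype.piFinset (fun j => Finset.Nat.antidiagonalTuple 9 (ρ j)),
        ((∏ j, (Nat.factorial (ρ j) : ℝ)) /
            ∏ i : Fin 9, ∏ j, (Nat.factorial (τ j i) : ℝ)) *
          ∏ i : Fin 9, (Nat.factorial (2 * ∑ j, τ j i) : ℝ)
      = ∑ τ ∈ Fintype.piFinset (fun j => Finset.Nat.antidiagonalTuple 9 (ρ j)),
        (∏ j, (((ρ j)! : ℝ) / ∏ i, ((τ j i)! : ℝ))) * ∏ i, (((2 * ∑ j, τ j i)! : ℝ)) := by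
        refine Finset.sum_congr rfl fun τ _ => ?_
        rw [Finset.prod_div_distrib, Finset.prod_comm]
    _ ≤ 3^9 * (((2 * ∑ j, ρ j)! : ℕ) : ℝ) := h
    _ = 3^9 * Nat.factorial (2 * ∑ j, ρ j) := by norm_num

end WKE
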